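/- Sub-super solution principle: let f : V × ℝ → ℝ be continuous in the second variable, set F(x,t) = ∫₀^t f(x,s) ds, and define the functional J_f(u) = ∫_V ( ½|∇u|² − F(·,u) ) dμ for u : V → ℝ. Suppose φ, ψ : V → ℝ satisfy φ ≤ ψ, −Δφ(x) ≤ f(x, φ(x)) for all x (φ is a subsolution) and −Δψ(x) ≥ f(x, ψ(x)) for all x (ψ is a supersolution). Then any minimizer u of J_f over the set {u : V → ℝ : φ ≤ u ≤ ψ} satisfies −Δu(x) = f(x, u(x)) for all x ∈ V. -/

import Mathlib

open Finset Real Filter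
open Topology

/-- The (μ-)Laplacian of `u` at vertex `x` on a finite weighted graph. -/
noncomputable def graphLap {V : Type*} [Fintype V] (ω : V → V → ℝ) (μ : V → ℝ)
    (u : V → ℝ) (x : V) : ℝ :=
  (1 / μ x) * ∑ y, ω x y * (u y - u x)

/-- Connectedness: any two vertices are joined by a path of adjacent vertices. -/
def graphConnected {V : Type*} [Fintype V] (ω : V → V → ℝ) : Prop :=
  ∀ x y : V, ∃ (n : ℕ) (p : ℕ → V), p 0 = x ∧ p n = y ∧ ∀ i < n, 0 < ω (p i) (p (i + 1))

/-- Maximum of a real function on a finite nonempty vertex set. -/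
noncomputable def maxV {V : Type*} [Fintype V] [Nonempty V] (f : V → ℝ) : ℝ :=
  Finset.univ.sup' Finset.univ_nonempty f

/-- Minimum of a real function on a finite nonempty vertex set. -/
noncomputable def minV {V : Type*} [Fintype V] [Nonempty V] (f : V → ℝ) : ℝ :=
  Finset.univ.inf' Finset.univ_nonempty f

/-- The energy functional `J_f` associated with the equation `−Δu = f(·,u)`. -/
noncomputable def Jfun {V : Type*} [Fintype V] (ω : V → V → ℝ) (μ : V → ℝ)
    (f : V → ℝ → ℝ) (w : V → ℝ) : ℝ :=
  ∑ x, ((1 / 2) * ((1 / (2 * μ x)) * ∑ y, ω x y * (w y - w x) ^ 2)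
    - ∫ s in (0 : ℝ)..(w x), f x s) * μ x

lemma Jfun_hasDerivAt {V : Type*} [Fintype V] [DecidableEq V] (ω : V → V → ℝ) (μ : V → ℝ)
    (hsymm : ∀ x y, ω x y = ω y x) (hμ : ∀ x, 0 < μ x)
    (f : V → ℝ → ℝ) (hf : ∀ x, Continuous (f x)) (u : V → ℝ) (x : V) :
    HasDerivAt (fun t => Jfun ω μ f (fun y => u y + t * (if y = x then 1 else 0)))
      (μ x * (-graphLap ω μ u x - f x (u x))) 0 := by
  set e : V → ℝ := fun y => if y = x then 1 else 0 with he
  have key : ∀ z : V, HasDerivAt (fun t =>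
      ((1 / 2) * ((1 / (2 * μ z)) * ∑ y, ω z y * (u y + t * e y - (u z + t * e z)) ^ 2)
        - ∫ s in (0:ℝ)..(u z + t * e z), f z s) * μ z)
      (((1 / 2) * ((1 / (2 * μ z)) * ∑ y, ω z y * (2 * (u y - u z) * (e y - e z)))
        - f z (u z) * e z) * μ z) 0 := by
    intro z
    have hlin : ∀ y : V, HasDerivAt (fun t : ℝ => u y + t * e y) (e y) 0 := by
      intro y
      simpa using ((hasDerivAt_id (0:ℝ)).mul_const (e y)).const_add (u y)
    have hsum : HasDerivAt (fun t => ∑ y, ω z y * (u y + t * e y - (u z + t * e z)) ^ 2)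
        (∑ y, ω z y * (2 * (u y - u z) * (e y - e z))) 0 := by
      apply HasDerivAt.fun_sum
      intro y _
      have h2 : HasDerivAt (fun t : ℝ => (u y + t * e y - (u z + t * e z)) ^ 2)
          (2 * (u y + 0 * e y - (u z + 0 * e z)) ^ 1 * (e y - e z)) 0 :=
        ((hlin y).sub (hlin z)).pow 2
      have := h2.const_mul (ω z y)
      exact this.congr_deriv (by ring)
    have hint : HasDerivAt (fun t => ∫ s in (0:ℝ)..(u z + t * e z), f z s)
        (f z (u z) * e z) 0 := by
      have hF : HasDerivAt (fun r => ∫ s in (0:ℝ)..r, f z s) (f z (u z + 0 * e z)) (u z + 0 * e z) :=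
        ((hf z).integral_hasStrictDerivAt 0 _).hasDerivAt
      have := hF.comp 0 (hlin z)
      simp only [zero_mul, add_zero] at this; exact this
    exact (((hsum.const_mul ((1:ℝ)/(2 * μ z))).const_mul ((1:ℝ)/2)).sub hint).mul_const (μ z)
  have hD := HasDerivAt.fun_sum (fun z (_ : z ∈ Finset.univ) => key z)
  have heq : ∑ z, (((1 / 2) * ((1 / (2 * μ z)) * ∑ y, ω z y * (2 * (u y - u z) * (e y - e z)))
        - f z (u z) * e z) * μ z) = μ x * (-graphLap ω μ u x - f x (u x)) := by
    have h1 : ∀ z, (((1 / 2) * ((1 / (2 * μ z)) * ∑ y, ω z y * (2 * (u y - u z) * (e y - e z)))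
        - f z (u z) * e z) * μ z)
        = (∑ y, ω z y * (2 * (u y - u z) * (e y - e z))) / 4 - f z (u z) * e z * μ z := by
      intro z
      have := (hμ z).ne'
      field_simp
      ring
    rw [Finset.sum_congr rfl (fun z _ => h1 z), Finset.sum_sub_distrib]
    have h2 : ∑ z, f z (u z) * e z * μ z = f x (u x) * μ x := by
      have : ∀ z, f z (u z) * e z * μ z = if z = x then f x (u x) * μ x else 0 := by
        intro z
        by_cases h : z = x <;> simp [he, h]
      rw [Finset.sum_congr rfl (fun z _ => this z), Finset.sum_ite_eq' Finset.univ x,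
        if_pos (Finset.mem_univ x)]
    have h3 : ∑ z, (∑ y, ω z y * (2 * (u y - u z) * (e y - e z))) / 4
        = - ∑ y, ω x y * (u y - u x) := by
      have expand : ∀ z, (∑ y, ω z y * (2 * (u y - u z) * (e y - e z))) / 4
          = ∑ y, ((ω z y * (u y - u z) / 2) * e y - (ω z y * (u y - u z) / 2) * e z) := by
        intro z
        rw [Finset.sum_div]
        exact Finset.sum_congr rfl fun y _ => by ring
      rw [Finset.sum_congr rfl (fun z _ => expand z)]
      have hsplit : ∑ z, ∑ y, ((ω z y * (u y - u z) / 2) * e y - (ω z y * (u y - u z) / 2) * e z)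
          = (∑ z, ∑ y, (ω z y * (u y - u z) / 2) * e y)
            - ∑ z, ∑ y, (ω z y * (u y - u z) / 2) * e z := by
        rw [← Finset.sum_sub_distrib]
        exact Finset.sum_congr rfl fun z _ => by rw [← Finset.sum_sub_distrib]
      rw [hsplit]
      have hA : ∑ z, ∑ y, (ω z y * (u y - u z) / 2) * e y
          = ∑ z, ω z x * (u x - u z) / 2 := by
        rw [Finset.sum_comm]
        have : ∀ y, ∑ z, (ω z y * (u y - u z) / 2) * e y
            = if y = x then ∑ z, ω z x * (u x - u z) / 2 else 0 := by
          intro y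
          by_cases h : y = x <;> simp [he, h, Finset.sum_mul]
        rw [Finset.sum_congr rfl (fun y _ => this y), Finset.sum_ite_eq' Finset.univ x,
          if_pos (Finset.mem_univ x)]
      have hB : ∑ z, ∑ y, (ω z y * (u y - u z) / 2) * e z
          = ∑ y, ω x y * (u y - u x) / 2 := by
        have : ∀ z, ∑ y, (ω z y * (u y - u z) / 2) * e z
            = if z = x then ∑ y, ω x y * (u y - u x) / 2 else 0 := by
          intro z
          by_cases h : z = x <;> simp [he, h, Finset.sum_mul]
        rw [Finset.sum_congr rfl (fun z _ => this z), Finset.sum_ite_eq' Finset.univ x,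
          if_pos (Finset.mem_univ x)]
      rw [hA, hB]
      have hflip : ∑ z, ω z x * (u x - u z) / 2 = ∑ z, -(ω x z * (u z - u x) / 2) :=
        Finset.sum_congr rfl fun z _ => by rw [hsymm z x]; ring
      rw [hflip, Finset.sum_neg_distrib, ← Finset.sum_div]
      ring
    rw [h2, h3, graphLap]
    have := (hμ x).ne'
    field_simp
  rw [heq] at hD
  simp only [Jfun]
  exact hD

lemma lap_compare {V : Type*} [Fintype V] (ω : V → V → ℝ) (μ : V → ℝ)
    (hnonneg : ∀ x y, 0 ≤ ω x y) (hμ : ∀ x, 0 < μ x)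
    (u w : V → ℝ) (x : V) (hle : ∀ y, u y ≤ w y) (hx : u x = w x) :
    graphLap ω μ u x ≤ graphLap ω μ w x := by
  unfold graphLap
  apply mul_le_mul_of_nonneg_left _ (one_div_nonneg.mpr (hμ x).le)
  apply Finset.sum_le_sum
  intro y _
  apply mul_le_mul_of_nonneg_left _ (hnonneg x y)
  have := hle y
  linarith [hx.le]

/-- Sub-super solution principle on graphs. -/
theorem stmt_15 {V : Type*} [Fintype V] [Nonempty V]
    (ω : V → V → ℝ) (μ : V → ℝ)
    (hsymm : ∀ x y, ω x y = ω y x)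
    (hnonneg : ∀ x y, 0 ≤ ω x y)
    (hconn : graphConnected ω)
    (hμ : ∀ x, 0 < μ x)
    (f : V → ℝ → ℝ) (hf : ∀ x, Continuous (f x))
    (φ ψ : V → ℝ)
    (hφψ : ∀ x, φ x ≤ ψ x)
    (hsub : ∀ x, -graphLap ω μ φ x ≤ f x (φ x))
    (hsup : ∀ x, f x (ψ x) ≤ -graphLap ω μ ψ x)
    (u : V → ℝ)
    (hu : ∀ x, φ x ≤ u x ∧ u x ≤ ψ x)
    (hmin : ∀ v : V → ℝ, (∀ x, φ x ≤ v x ∧ v x ≤ ψ x) →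
      Jfun ω μ f u ≤ Jfun ω μ f v) :
    ∀ x, -graphLap ω μ u x = f x (u x) := by
  classical
  intro x
  set g : ℝ → ℝ := fun t => Jfun ω μ f (fun y => u y + t * (if y = x then 1 else 0)) with hg
  have hD : HasDerivAt g (μ x * (-graphLap ω μ u x - f x (u x))) 0 :=
    Jfun_hasDerivAt ω μ hsymm hμ f hf u x
  have hfun : (fun y => u y + (0:ℝ) * (if y = x then (1:ℝ) else 0)) = u := by
    funext y; ring
  have hg0 : g 0 = Jfun ω μ f u := congrArg (Jfun ω μ f) hfun
  have hadm : ∀ t : ℝ, φ x ≤ u x + t → u x + t ≤ ψ x →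
      ∀ y, φ y ≤ u y + t * (if y = x then 1 else 0) ∧
        u y + t * (if y = x then 1 else 0) ≤ ψ y := by
    intro t h1 h2 y
    by_cases h : y = x
    · subst h; simpa using ⟨h1, h2⟩
    · simpa [h] using hu y
  have hslope := hasDerivAt_iff_tendsto_slope.mp hD
  have hge : f x (u x) ≤ -graphLap ω μ u x := by
    rcases eq_or_lt_of_le (hu x).2 with h | h
    · -- u x = ψ x : use supersolution
      have h1 : graphLap ω μ u x ≤ graphLap ω μ ψ x :=
        lap_compare ω μ hnonneg hμ u ψ x (fun y => (hu y).2) h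
      calc f x (u x) = f x (ψ x) := by rw [h]
        _ ≤ -graphLap ω μ ψ x := hsup x
        _ ≤ -graphLap ω μ u x := by linarith
    · -- u x < ψ x : right derivative nonneg
      have htend : Tendsto (slope g 0) (𝓝[>] (0:ℝ))
          (𝓝 (μ x * (-graphLap ω μ u x - f x (u x)))) :=
        hslope.mono_left (nhdsWithin_mono 0 (fun t ht => ne_of_gt ht))
      have hev : ∀ᶠ t in 𝓝[>] (0:ℝ), 0 ≤ slope g 0 t := by
        filter_upwards [Ioo_mem_nhdsGT_of_mem (by constructor <;> [rfl; linarith] :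
            (0:ℝ) ∈ Set.Ico (0:ℝ) (ψ x - u x))] with t ht
        have hgt : g 0 ≤ g t := by
          rw [hg0]
          exact hmin _ (hadm t (by linarith [(hu x).1, ht.1]) (by linarith [ht.2]))
        rw [slope_def_field]
        exact div_nonneg (by linarith) (by linarith [ht.1])
      have h0 : 0 ≤ μ x * (-graphLap ω μ u x - f x (u x)) := ge_of_tendsto htend hev
      nlinarith [hμ x]
  have hle : -graphLap ω μ u x ≤ f x (u x) := by
    rcases eq_or_lt_of_le (hu x).1 with h | h
    · -- φ x = u x : use subsolution
      have h1 : graphLap ω μ φ x ≤ graphLap ω μ u x :=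
        lap_compare ω μ hnonneg hμ φ u x (fun y => (hu y).1) h
      calc -graphLap ω μ u x ≤ -graphLap ω μ φ x := by linarith
        _ ≤ f x (φ x) := hsub x
        _ = f x (u x) := by rw [h]
    · -- φ x < u x : left derivative nonpos
      have htend : Tendsto (slope g 0) (𝓝[<] (0:ℝ))
          (𝓝 (μ x * (-graphLap ω μ u x - f x (u x)))) :=
        hslope.mono_left (nhdsWithin_mono 0 (fun t ht => ne_of_lt ht))
      have hev : ∀ᶠ t in 𝓝[<] (0:ℝ), slope g 0 t ≤ 0 := by
        filter_upwards [Ioo_mem_nhdsLT_of_mem (by constructor <;> [linarith; rfl] :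
            (0:ℝ) ∈ Set.Ioc (φ x - u x) (0:ℝ))] with t ht
        have hgt : g 0 ≤ g t := by
          rw [hg0]
          exact hmin _ (hadm t (by linarith [ht.1]) (by linarith [(hu x).2, ht.2]))
        rw [slope_def_field]
        apply div_nonpos_of_nonneg_of_nonpos (by linarith)
        linarith [ht.2]
      have h0 : μ x * (-graphLap ω μ u x - f x (u x)) ≤ 0 := le_of_tendsto htend hev
      nlinarith [hμ x]
  exact le_antisymm hle hge
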